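/- Let p be a prime, let r, s ≥ 1, and let G = ℤ/d_1ℤ × ⋯ × ℤ/d_nℤ be a product of cyclic groups with each d_i dividing p^r. Let W be a p^s-torsion abelian group, and let P : ℤ^n → W be a polynomial of degree at most k, i.e. ∂_{h_1}⋯∂_{h_{k+1}} P = 0 for all h_1,…,h_{k+1} ∈ ℤ^n, where ∂_h P(x) := P(x+h) − P(x). Then the map x ↦ P(|x|) from G to W is a polynomial of degree at most k·s·(p^r−1), i.e. all its iterated difference operators of order k·s·(p^r−1)+1 vanish identically. -/

import Mathlib

/-- The discrete derivative `∂_h f (x) = f(x+h) - f(x)`. -/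
def addDeriv {A M : Type*} [AddCommGroup A] [AddCommGroup M] (h : A) (f : A → M) : A → M :=
  fun x => f (x + h) - f x

/-- Iterated discrete derivative `∂_{h_1} ⋯ ∂_{h_j} f`. -/
def addDerivIter {A M : Type*} [AddCommGroup A] [AddCommGroup M] :
    (j : ℕ) → (Fin j → A) → (A → M) → (A → M)
  | 0, _, f => f
  | j + 1, h, f => addDerivIter j (fun i => h i.succ) (addDeriv (h 0) f)

open Finset

section Basics

variable {A M N : Type*} [AddCommGroup A] [AddCommGroup M] [AddCommGroup N]

/-- `PD m f` : `f` is a polynomial of degree at most `m`. -/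
def PD (m : ℕ) (f : A → M) : Prop :=
  ∀ h : Fin (m + 1) → A, addDerivIter (m + 1) h f = 0

lemma addDeriv_zero_fun (a : A) : addDeriv a (0 : A → M) = 0 := by
  funext x; simp [addDeriv]

lemma addDeriv_add (a : A) (f g : A → M) :
    addDeriv a (f + g) = addDeriv a f + addDeriv a g := by
  funext x; simp [addDeriv]; abel

lemma addDeriv_zsmul (a : A) (c : ℤ) (f : A → M) :
    addDeriv a (c • f) = c • addDeriv a f := by
  funext x; simp [addDeriv, smul_sub]

lemma addDeriv_comm (a b : A) (f : A → M) :
    addDeriv a (addDeriv b f) = addDeriv b (addDeriv a f) := by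
  funext x; simp [addDeriv, add_right_comm]; abel

lemma addDerivIter_deriv (j : ℕ) (h : Fin j → A) (a : A) (f : A → M) :
    addDerivIter j h (addDeriv a f) = addDeriv a (addDerivIter j h f) := by
  induction j generalizing f with
  | zero => rfl
  | succ j ih =>
    show addDerivIter j _ (addDeriv (h 0) (addDeriv a f)) = _
    rw [addDeriv_comm (h 0) a, ih]
    rfl

lemma addDerivIter_zero_fun (j : ℕ) (h : Fin j → A) :
    addDerivIter j h (0 : A → M) = 0 := by
  induction j with
  | zero => rfl
  | succ j ih =>
    show addDerivIter j _ (addDeriv (h 0) 0) = 0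
    rw [addDeriv_zero_fun, ih]

lemma addDerivIter_add (j : ℕ) (h : Fin j → A) (f g : A → M) :
    addDerivIter j h (f + g) = addDerivIter j h f + addDerivIter j h g := by
  induction j generalizing f g with
  | zero => rfl
  | succ j ih =>
    show addDerivIter j _ (addDeriv (h 0) (f + g)) = _
    rw [addDeriv_add, ih]
    rfl

lemma addDerivIter_zsmul (j : ℕ) (h : Fin j → A) (c : ℤ) (f : A → M) :
    addDerivIter j h (c • f) = c • addDerivIter j h f := by
  induction j generalizing f with
  | zero => rfl
  | succ j ih =>
    show addDerivIter j _ (addDeriv (h 0) (c • f)) = _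
    rw [addDeriv_zsmul, ih]
    rfl

lemma pd_zero_fun (m : ℕ) : PD m (0 : A → M) := fun h => addDerivIter_zero_fun _ h

lemma pd_iff (m : ℕ) (f : A → M) :
    PD (m + 1) f ↔ ∀ a : A, PD m (addDeriv a f) := by
  constructor
  · intro H a h
    have := H (Fin.cons a h)
    show addDerivIter (m + 1) h (addDeriv a f) = 0
    simpa [addDerivIter] using this
  · intro H h
    show addDerivIter (m + 1) (fun i => h i.succ) (addDeriv (h 0) f) = 0
    exact H (h 0) (fun i => h i.succ)

lemma pd_deriv {m : ℕ} {f : A → M} (H : PD (m + 1) f) (a : A) : PD m (addDeriv a f) :=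
  (pd_iff m f).1 H a

lemma pd_add {m : ℕ} {f g : A → M} (hf : PD m f) (hg : PD m g) : PD m (f + g) := by
  intro h; rw [addDerivIter_add, hf h, hg h, add_zero]

lemma pd_zsmul {m : ℕ} {f : A → M} (c : ℤ) (hf : PD m f) : PD m (c • f) := by
  intro h; rw [addDerivIter_zsmul, hf h, smul_zero]

lemma pd_succ {m : ℕ} {f : A → M} (hf : PD m f) : PD (m + 1) f := by
  intro h
  show addDerivIter (m + 1) (fun i => h i.succ) (addDeriv (h 0) f) = 0
  rw [addDerivIter_deriv, hf (fun i => h i.succ), addDeriv_zero_fun]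

lemma pd_mono {m m' : ℕ} (hm : m ≤ m') {f : A → M} (hf : PD m f) : PD m' f := by
  induction m' with
  | zero => exact (Nat.le_zero.mp hm) ▸ hf
  | succ m' ih =>
    rcases Nat.lt_or_ge m (m' + 1) with hlt | hge
    · exact pd_succ (ih (Nat.lt_succ_iff.mp hlt))
    · exact (Nat.le_antisymm hm hge) ▸ hf

lemma addDerivIter_comp_hom (φ : N →+ A) (j : ℕ) (h : Fin j → N) (f : A → M) :
    addDerivIter j h (f ∘ φ) = (addDerivIter j (fun i => φ (h i)) f) ∘ φ := by
  induction j generalizing f with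
  | zero => rfl
  | succ j ih =>
    show addDerivIter j _ (addDeriv (h 0) (f ∘ φ)) = _
    have : addDeriv (h 0) (f ∘ φ) = (addDeriv (φ (h 0)) f) ∘ φ := by
      funext x; simp [addDeriv, Function.comp, map_add]
    rw [this, ih]
    rfl

lemma pd_comp_hom {m : ℕ} (φ : N →+ A) {f : A → M} (hf : PD m f) :
    PD m (f ∘ φ) := by
  intro h
  rw [addDerivIter_comp_hom]
  rw [hf (fun i => φ (h i))]
  rfl

lemma addDerivIter_comp_shift (c : A) (j : ℕ) (h : Fin j → A) (f : A → M) :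
    addDerivIter j h (fun x => f (x + c)) = fun x => addDerivIter j h f (x + c) := by
  induction j generalizing f with
  | zero => rfl
  | succ j ih =>
    show addDerivIter j _ (addDeriv (h 0) fun x => f (x + c)) = _
    have : addDeriv (h 0) (fun x => f (x + c)) = fun x => addDeriv (h 0) f (x + c) := by
      funext x; simp [addDeriv, add_right_comm]
    rw [this, ih]
    rfl

lemma pd_comp_shift {m : ℕ} (c : A) {f : A → M} (hf : PD m f) :
    PD m (fun x => f (x + c)) := by
  intro h
  rw [addDerivIter_comp_shift, hf h]
  rfl

lemma pd_fun_sum {ι : Type*} {m : ℕ} (S : Finset ι) (G : ι → A → M)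
    (hG : ∀ i ∈ S, PD m (G i)) : PD m (fun x => ∑ i ∈ S, G i x) := by
  classical
  induction S using Finset.induction_on with
  | empty => simp only [Finset.sum_empty]; exact pd_zero_fun m
  | @insert a S' hnot ih =>
    have : (fun x => ∑ i ∈ insert a S', G i x) = G a + fun x => ∑ i ∈ S', G i x := by
      funext x; simp [Finset.sum_insert hnot]
    rw [this]
    exact pd_add (hG a (Finset.mem_insert_self a S'))
      (ih fun i hi => hG i (Finset.mem_insert_of_mem hi))

lemma addDerivIter_const (m : ℕ) (a : A) (f : A → M) :
    addDerivIter m (fun _ => a) f = (addDeriv a)^[m] f := by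
  induction m generalizing f with
  | zero => rfl
  | succ m ih =>
    show addDerivIter m (fun _ => a) (addDeriv a f) = _
    rw [ih, Function.iterate_succ_apply]

lemma pd_const_of_subsingleton [Subsingleton A] (f : A → M) : PD 0 f := by
  intro h
  show addDeriv (h 0) f = 0
  funext x
  simp [addDeriv, Subsingleton.elim (x + h 0) x]

end Basics

section Cyclic

variable {A M : Type*} [AddCommGroup A] [AddCommGroup M]

/-- Translation by `a` as an additive endomorphism of the function space. -/
def trEnd (a : A) : AddMonoid.End (A → M) :=
  AddMonoidHom.mk' (fun f => fun x => f (x + a)) (by intro f g; rfl)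

lemma trEnd_apply (a : A) (f : A → M) (x : A) : (trEnd a f) x = f (x + a) := rfl

lemma trEnd_mul (a b : A) : (trEnd a : AddMonoid.End (A → M)) * trEnd b = trEnd (a + b) := by
  refine AddMonoidHom.ext fun f => funext fun x => ?_
  show f (x + a + b) = f (x + (a + b))
  rw [add_assoc]

lemma trEnd_pow (a : A) (m : ℕ) : (trEnd a : AddMonoid.End (A → M)) ^ m = trEnd (m • a) := by
  induction m with
  | zero =>
    refine AddMonoidHom.ext fun f => funext fun x => ?_
    show f x = f (x + 0 • a)
    simp
  | succ m ih =>
    rw [pow_succ, ih, trEnd_mul, succ_nsmul]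

lemma trEnd_zero : (trEnd (0 : A) : AddMonoid.End (A → M)) = 1 := by
  refine AddMonoidHom.ext fun f => funext fun x => ?_
  show f (x + 0) = f x
  rw [add_zero]

lemma addDeriv_eq_trEnd (a : A) (f : A → M) :
    addDeriv a f = (trEnd a - 1 : AddMonoid.End (A → M)) f := rfl

lemma addDeriv_iterate_eq (a : A) (m : ℕ) (f : A → M) :
    (addDeriv a)^[m] f = ((trEnd a - 1 : AddMonoid.End (A → M)) ^ m) f := by
  induction m generalizing f with
  | zero => rfl
  | succ m ih =>
    rw [Function.iterate_succ_apply', ih, addDeriv_eq_trEnd, pow_succ']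
    rfl

/-- Key identity: if `q • a = 0` then `Δ_a^q f = -∑_{0<j<q} C(q,j) • Δ_a^j f`. -/
lemma delta_pow_eq (q : ℕ) (hq : 1 ≤ q) (a : A) (ha : q • a = 0) (f : A → M) :
    (addDeriv a)^[q] f = - ∑ j ∈ Finset.Ico 1 q, (q.choose j) • (addDeriv a)^[j] f := by
  set T : AddMonoid.End (A → M) := trEnd a with hT
  have hTq : T ^ q = 1 := by rw [hT, trEnd_pow, ha, trEnd_zero]
  have hexp : (1 : AddMonoid.End (A → M)) =
      ∑ m ∈ Finset.range (q + 1), (T - 1) ^ m * ((q.choose m : ℕ) : AddMonoid.End (A → M)) := by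
    calc (1 : AddMonoid.End (A → M)) = T ^ q := hTq.symm
      _ = ((T - 1) + 1) ^ q := by rw [sub_add_cancel]
      _ = ∑ m ∈ Finset.range (q + 1), (T - 1) ^ m * 1 ^ (q - m) * ((q.choose m : ℕ) : AddMonoid.End (A → M)) :=
          (Commute.one_right (T - 1)).add_pow q
      _ = _ := by
          refine Finset.sum_congr rfl fun m _ => ?_
          rw [one_pow, mul_one]
  have happ : f = ∑ m ∈ Finset.range (q + 1), (q.choose m) • ((T - 1) ^ m) f := by
    conv_lhs => rw [show f = (1 : AddMonoid.End (A → M)) f from rfl, hexp]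
    erw [AddMonoidHom.finset_sum_apply]
    refine Finset.sum_congr rfl fun m _ => ?_
    show ((T - 1) ^ m) (((q.choose m : ℕ) : AddMonoid.End (A → M)) f) = _
    rw [AddMonoid.End.natCast_apply, map_nsmul]
  rw [Finset.sum_range_succ, Nat.choose_self, one_smul] at happ
  have h0 : ∑ m ∈ Finset.range q, q.choose m • ((T - 1) ^ m) f
      = f + ∑ m ∈ Finset.Ico 1 q, q.choose m • ((T - 1) ^ m) f := by
    rw [Finset.range_eq_Ico, Finset.sum_eq_sum_Ico_succ_bot (by omega : 0 < q)]
    simp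
  rw [h0] at happ
  have hfin : ((T - 1) ^ q) f
      = - ∑ m ∈ Finset.Ico 1 q, q.choose m • ((T - 1) ^ m) f := by
    have h2 : f + ((∑ m ∈ Finset.Ico 1 q, q.choose m • ((T - 1) ^ m) f) + ((T - 1) ^ q) f) = f := by
      rw [← add_assoc]; exact happ.symm
    have h3 := add_left_cancel (h2.trans (add_zero f).symm)
    exact eq_neg_of_add_eq_zero_right h3
  rw [addDeriv_iterate_eq a q f, hfin]
  exact congrArg Neg.neg (Finset.sum_congr rfl fun j _ => by rw [addDeriv_iterate_eq])

end Cyclic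

section Nilpotency

variable {A M : Type*} [AddCommGroup A] [AddCommGroup M]

lemma addDeriv_iterate_zero_fun (a : A) (m : ℕ) :
    (addDeriv a)^[m] (0 : A → M) = 0 := by
  induction m with
  | zero => rfl
  | succ m ih => rw [Function.iterate_succ_apply, addDeriv_zero_fun, ih]

lemma addDeriv_iterate_nsmul (a : A) (m : ℕ) (c : ℕ) (f : A → M) :
    (addDeriv a)^[m] (c • f) = c • (addDeriv a)^[m] f := by
  rw [addDeriv_iterate_eq, addDeriv_iterate_eq, map_nsmul]

lemma nilp (p : ℕ) (hp : p.Prime) (r : ℕ) (a : A) (ha : p ^ r • a = 0) :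
    ∀ (s : ℕ) (f : A → M), (∀ x, p ^ s • f x = 0) →
      (addDeriv a)^[s * (p ^ r - 1) + 1] f = 0 := by
  have hq : 1 ≤ p ^ r := Nat.one_le_pow _ _ hp.pos
  intro s
  induction s with
  | zero =>
    intro f hf
    have hf0 : f = 0 := by funext x; simpa using hf x
    rw [hf0]
    exact addDeriv_iterate_zero_fun a _
  | succ s ih =>
    intro f hf
    have e1 : (s + 1) * (p ^ r - 1) + 1 = s * (p ^ r - 1) + p ^ r := by
      rw [Nat.succ_mul]
      omega
    rw [e1, Function.iterate_add_apply, delta_pow_eq (p ^ r) hq a ha f,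
      addDeriv_iterate_eq, map_neg, map_sum, neg_eq_zero]
    refine Finset.sum_eq_zero fun j hj => ?_
    rw [Finset.mem_Ico] at hj
    obtain ⟨c, hc⟩ := Nat.Prime.dvd_choose_pow hp (by omega : j ≠ 0) (by omega : j ≠ p ^ r)
    rw [map_nsmul, hc, mul_comm p c, mul_smul]
    have key : p • ((trEnd a - 1 : AddMonoid.End (A → M)) ^ (s * (p ^ r - 1)))
        ((addDeriv a)^[j] f) = 0 := by
      rw [← map_nsmul, ← addDeriv_iterate_nsmul, ← addDeriv_iterate_eq,
        ← Function.iterate_add_apply]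
      have e2 : s * (p ^ r - 1) + j = (j - 1) + (s * (p ^ r - 1) + 1) := by omega
      rw [e2, Function.iterate_add_apply,
        ih (p • f) (fun x => by
          show p ^ s • (p • f x) = 0
          rw [smul_smul, ← pow_succ]
          exact hf x),
        addDeriv_iterate_zero_fun]
    rw [key, smul_zero]

lemma addDeriv_nsmul_gen (a : A) (v : ℕ) (f : A → M) :
    addDeriv (v • a) f = fun x => ∑ j ∈ Finset.range v, addDeriv a f (x + j • a) := by
  induction v with
  | zero => funext x; simp [addDeriv]
  | succ v ih =>
    funext x
    calc addDeriv ((v + 1) • a) f x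
        = addDeriv (v • a) f x + addDeriv a f (x + v • a) := by
          simp only [addDeriv, succ_nsmul, ← add_assoc]
          abel
      _ = (∑ j ∈ Finset.range v, addDeriv a f (x + j • a)) + addDeriv a f (x + v • a) := by
          rw [ih]
      _ = ∑ j ∈ Finset.range (v + 1), addDeriv a f (x + j • a) :=
          (Finset.sum_range_succ _ _).symm

lemma pd_of_gen (a : A) (gen : ∀ x : A, ∃ v : ℕ, x = v • a) :
    ∀ (m : ℕ) (f : A → M), (addDeriv a)^[m + 1] f = 0 → PD m f := by
  intro m
  induction m with
  | zero =>
    intro f hf h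
    show addDeriv (h 0) f = 0
    obtain ⟨v, hv⟩ := gen (h 0)
    rw [hv, addDeriv_nsmul_gen]
    funext x
    refine Finset.sum_eq_zero fun j _ => ?_
    rw [show addDeriv a f = 0 by simpa using hf]
    rfl
  | succ m ih =>
    intro f hf
    rw [pd_iff]
    intro b
    obtain ⟨v, hv⟩ := gen b
    rw [hv, addDeriv_nsmul_gen]
    refine pd_fun_sum _ _ fun j _ => ?_
    refine pd_comp_shift (j • a) (ih (addDeriv a f) ?_)
    rw [← Function.iterate_succ_apply]
    exact hf

lemma pd_torsion_cyclic (p r : ℕ) (hp : p.Prime) (d : ℕ) (hdvd : d ∣ p ^ r) (σ : ℕ)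
    (f : ZMod d → M) (hf : ∀ x, p ^ σ • f x = 0) : PD (σ * (p ^ r - 1)) f := by
  haveI : NeZero d := ⟨by
    intro h
    subst h
    exact absurd (Nat.eq_zero_of_zero_dvd hdvd) (pow_ne_zero r hp.ne_zero)⟩
  have ha : p ^ r • (1 : ZMod d) = 0 := by
    rw [nsmul_eq_mul, mul_one]
    exact (ZMod.natCast_eq_zero_iff _ _).mpr hdvd
  have gen : ∀ x : ZMod d, ∃ v : ℕ, x = v • (1 : ZMod d) := fun x =>
    ⟨x.val, by rw [nsmul_eq_mul, mul_one, ZMod.natCast_rightInverse x]⟩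
  exact pd_of_gen 1 gen _ f (nilp p hp r 1 ha σ f hf)

end Nilpotency

section Binomial

variable {A M : Type*} [AddCommGroup A] [AddCommGroup M]

lemma pd_const (w : M) : PD 0 (fun _ : A => w) := by
  intro h
  show addDeriv (h 0) (fun _ => w) = 0
  funext x
  simp [addDeriv]

lemma pd_neg {m : ℕ} {f : A → M} (hf : PD m f) : PD m (-f) := by
  have := pd_zsmul (-1) hf
  simpa using this

lemma pd_sub {m : ℕ} {f g : A → M} (hf : PD m f) (hg : PD m g) : PD m (f - g) := by
  have := pd_add hf (pd_neg hg)
  simpa [sub_eq_add_neg] using this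

lemma delta_of_pd {m : ℕ} {f : A → M} (hf : PD m f) (e : A) :
    (addDeriv e)^[m + 1] f = 0 := by
  rw [← addDerivIter_const]
  exact hf (fun _ => e)

lemma pd_zmod_of_delta (d : ℕ) [NeZero d] (m : ℕ) (f : ZMod d → M)
    (hf : (addDeriv (1 : ZMod d))^[m + 1] f = 0) : PD m f := by
  have gen : ∀ x : ZMod d, ∃ v : ℕ, x = v • (1 : ZMod d) := fun x =>
    ⟨x.val, by rw [nsmul_eq_mul, mul_one, ZMod.natCast_rightInverse x]⟩
  exact pd_of_gen 1 gen m f hf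

variable {W : Type*} [AddCommGroup W]

lemma pd_binomial (p r s : ℕ) (hp : p.Prime) (hr : 1 ≤ r) (hs : 1 ≤ s)
    (hW : ∀ w : W, p ^ s • w = 0) (d : ℕ) (hdvd : d ∣ p ^ r) :
    ∀ (a : ℕ) (c : W), PD (a * s * (p ^ r - 1)) (fun x : ZMod d => x.val.choose a • c) := by
  haveI : NeZero d := ⟨by
    intro h
    subst h
    exact absurd (Nat.eq_zero_of_zero_dvd hdvd) (pow_ne_zero r hp.ne_zero)⟩
  have hD : 1 ≤ p ^ r - 1 := by
    have h2 : 2 ≤ p ^ r := by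
      calc 2 ≤ p := hp.two_le
        _ = p ^ 1 := (pow_one p).symm
        _ ≤ p ^ r := Nat.pow_le_pow_right hp.pos hr
    omega
  have hu : 1 ≤ s * (p ^ r - 1) := Nat.one_le_iff_ne_zero.mpr (by positivity)
  by_cases hd1 : d = 1
  · subst hd1
    intro a c
    exact pd_mono (Nat.zero_le _) (pd_const_of_subsingleton _)
  have hd2 : 2 ≤ d := by
    rcases Nat.eq_zero_or_pos d with h | h
    · exact absurd h (NeZero.ne d)
    · omega
  intro a
  induction a with
  | zero =>
    intro c
    have : (fun x : ZMod d => x.val.choose 0 • c) = fun _ => c := by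
      funext x; simp
    rw [this]
    exact pd_mono (Nat.zero_le _) (pd_const c)
  | succ a ih =>
    intro c
    set D := p ^ r - 1 with hDdef
    set f : ZMod d → W := fun x => x.val.choose (a + 1) • c with hfdef
    set E : ZMod d → W := fun x => if x.val = d - 1 then d.choose (a + 1) • c else 0 with hEdef
    set g : ZMod d → W := fun x => x.val.choose a • c with hgdef
    have hval1 : (1 : ZMod d).val = 1 := by
      rw [ZMod.val_one_eq_one_mod, Nat.mod_eq_of_lt hd2]
    have hDelta : addDeriv (1 : ZMod d) f = g - E := by
      funext x
      have hxlt : x.val < d := ZMod.val_lt x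
      have hadd : (x + 1).val = (x.val + 1) % d := by
        rw [ZMod.val_add, hval1]
      show (x + 1).val.choose (a + 1) • c - x.val.choose (a + 1) • c = g x - E x
      by_cases hx : x.val = d - 1
      · have h0 : (x + 1).val = 0 := by
          rw [hadd, hx, show d - 1 + 1 = d by omega, Nat.mod_self]
        have hch : d.choose (a + 1) = (d - 1).choose a + (d - 1).choose (a + 1) := by
          conv_lhs => rw [show d = (d - 1) + 1 by omega]
          exact Nat.choose_succ_succ _ _
        simp only [hgdef, hEdef, h0, hx, if_pos rfl]
        rw [Nat.choose_eq_zero_of_lt (by omega : 0 < a + 1), hch, add_nsmul, zero_nsmul]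
        rw [if_pos trivial]
        abel
      · have h1 : (x + 1).val = x.val + 1 := by
          rw [hadd, Nat.mod_eq_of_lt (by omega)]
        simp only [hgdef, hEdef, h1, if_neg hx]
        rw [Nat.choose_succ_succ, add_nsmul]
        abel
    -- degree bound for E
    have hE : PD (a * s * D + s * D - 1) E := by
      rcases lt_trichotomy (a + 1) d with hlt | heq | hgt
      · -- p divides the binomial coefficient
        obtain ⟨t, ht, hdt⟩ := (Nat.dvd_prime_pow hp).mp hdvd
        have ht1 : t ≠ 0 := by
          intro h0
          rw [h0, pow_zero] at hdt
          exact hd1 hdt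
        have hpd : p ∣ d.choose (a + 1) := by
          rw [hdt]
          exact Nat.Prime.dvd_choose_pow hp (Nat.succ_ne_zero a) (by rw [← hdt]; omega)
        obtain ⟨c', hc'⟩ := hpd
        have htor : ∀ x, p ^ (s - 1) • E x = 0 := by
          intro x
          simp only [hEdef]
          split
          · rw [hc', smul_smul,
              show p ^ (s - 1) * (p * c') = c' * p ^ s by
                conv_rhs => rw [show s = s - 1 + 1 by omega, pow_succ]
                ring,
              mul_smul, hW c, smul_zero]
          · rw [smul_zero]
        have := pd_torsion_cyclic p r hp d hdvd (s - 1) E htor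
        refine pd_mono ?_ this
        rw [← hDdef, Nat.sub_mul, one_mul]
        omega
      · -- a + 1 = d : coefficient is 1, use full torsion bound
        have htor : ∀ x, p ^ s • E x = 0 := by
          intro x
          simp only [hEdef]
          split
          · rw [smul_comm, hW c, smul_zero]
          · rw [smul_zero]
        have := pd_torsion_cyclic p r hp d hdvd s E htor
        refine pd_mono ?_ this
        have h1u : 1 * (s * D) ≤ a * (s * D) := Nat.mul_le_mul_right _ (by omega)
        rw [← hDdef, mul_assoc]
        omega
      · -- coefficient vanishes
        have hch0 : d.choose (a + 1) = 0 := Nat.choose_eq_zero_of_lt hgt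
        have hE0 : E = 0 := by
          funext x
          simp only [hEdef, hch0, zero_smul]
          split <;> rfl
        rw [hE0]
        exact pd_zero_fun _
    have hg : PD (a * s * D + s * D - 1) g := by
      refine pd_mono ?_ (ih c)
      omega
    have hpd : PD (a * s * D + s * D - 1) (addDeriv (1 : ZMod d) f) := by
      rw [hDelta]
      exact pd_sub hg hE
    have harith : (a + 1) * s * D = a * s * D + s * D := by ring
    rw [harith]
    refine pd_zmod_of_delta d _ f ?_
    have hge1 : 1 ≤ a * s * D + s * D := by
      have : 1 ≤ s * D := hu
      omega
    rw [show a * s * D + s * D + 1 = (a * s * D + s * D - 1 + 1) + 1 by omega,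
      Function.iterate_succ_apply]
    exact delta_of_pd hpd 1

end Binomial

section Newton

variable {A M : Type*} [AddCommGroup A] [AddCommGroup M]

lemma trEnd_pow_expand (a : A) (m : ℕ) :
    (trEnd a : AddMonoid.End (A → M)) ^ m =
      ∑ j ∈ Finset.range (m + 1),
        (trEnd a - 1) ^ j * ((m.choose j : ℕ) : AddMonoid.End (A → M)) := by
  calc (trEnd a : AddMonoid.End (A → M)) ^ m
      = ((trEnd a - 1) + 1) ^ m := by rw [sub_add_cancel]
    _ = ∑ j ∈ Finset.range (m + 1),
          (trEnd a - 1) ^ j * 1 ^ (m - j) * ((m.choose j : ℕ) : AddMonoid.End (A → M)) :=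
        (Commute.one_right _).add_pow m
    _ = _ := by
        refine Finset.sum_congr rfl fun j _ => ?_
        rw [one_pow, mul_one]

lemma newton (g : ℤ → M) (k : ℕ) (hg : (addDeriv (1 : ℤ))^[k + 1] g = 0) (m : ℕ) :
    g (m : ℤ) = ∑ a ∈ Finset.range (k + 1), m.choose a • (addDeriv (1 : ℤ))^[a] g 0 := by
  have hvan : ∀ j, k + 1 ≤ j → (addDeriv (1 : ℤ))^[j] g = 0 := by
    intro j hj
    rw [show j = (j - (k + 1)) + (k + 1) by omega, Function.iterate_add_apply, hg,
      addDeriv_iterate_zero_fun]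
  have h1 : g (m : ℤ) = ((trEnd (1 : ℤ) : AddMonoid.End (ℤ → M)) ^ m) g 0 := by
    rw [trEnd_pow]
    show g _ = g (0 + m • (1 : ℤ))
    rw [zero_add, nsmul_eq_mul, mul_one]
  rw [h1, trEnd_pow_expand, show ∀ (S : Finset ℕ) (F : ℕ → AddMonoid.End (ℤ → M)) (y : ℤ → M),
      (∑ j ∈ S, F j) y = ∑ j ∈ S, F j y from fun S F y => by
        erw [AddMonoidHom.finset_sum_apply]; rfl, Finset.sum_apply]
  have hterm : ∀ j, ((trEnd (1 : ℤ) - 1 : AddMonoid.End (ℤ → M)) ^ j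
      * ((m.choose j : ℕ) : AddMonoid.End (ℤ → M))) g 0
      = m.choose j • ((addDeriv (1 : ℤ))^[j] g) 0 := by
    intro j
    show (((trEnd (1 : ℤ) - 1 : AddMonoid.End (ℤ → M)) ^ j)
      (((m.choose j : ℕ) : AddMonoid.End (ℤ → M)) g)) 0 = _
    rw [AddMonoid.End.natCast_apply, map_nsmul, ← addDeriv_iterate_eq]
    rfl
  have e0 : (∑ j ∈ Finset.range (m + 1), ((trEnd (1 : ℤ) - 1 : AddMonoid.End (ℤ → M)) ^ j
      * ((m.choose j : ℕ) : AddMonoid.End (ℤ → M))) g 0)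
      = ∑ j ∈ Finset.range (m + 1), m.choose j • ((addDeriv (1 : ℤ))^[j] g) 0 :=
    Finset.sum_congr rfl fun j _ => hterm j
  rw [e0]
  have e1 : ∑ j ∈ Finset.range (m + 1), m.choose j • ((addDeriv (1 : ℤ))^[j] g) 0
      = ∑ j ∈ Finset.range (m + k + 2), m.choose j • ((addDeriv (1 : ℤ))^[j] g) 0 :=
    Finset.sum_subset (Finset.range_subset_range.mpr (by omega)) (fun j _ hj => by
      rw [Nat.choose_eq_zero_of_lt (by simp only [Finset.mem_range] at hj; omega), zero_nsmul])
  have e2 : ∑ j ∈ Finset.range (k + 1), m.choose j • ((addDeriv (1 : ℤ))^[j] g) 0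
      = ∑ j ∈ Finset.range (m + k + 2), m.choose j • ((addDeriv (1 : ℤ))^[j] g) 0 :=
    Finset.sum_subset (Finset.range_subset_range.mpr (by omega)) (fun j _ hj => by
      rw [hvan j (by simp only [Finset.mem_range] at hj; omega)]
      simp)
  rw [e1, e2]

end Newton

section Leibniz

variable {A₁ A₂ W : Type*} [AddCommGroup A₁] [AddCommGroup A₂] [AddCommGroup W]

lemma pd_leibniz :
    ∀ (N α β : ℕ), α + β = N → ∀ (u : A₁ → ℤ) (g : A₂ → W),
      (∀ c : W, PD α (fun t => u t • c)) → PD β g →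
      PD N (fun x : A₁ × A₂ => u x.1 • g x.2) := by
  intro N
  induction N with
  | zero =>
    intro α β hab u g hu hg
    obtain ⟨rfl, rfl⟩ : α = 0 ∧ β = 0 := by omega
    intro h
    show addDeriv (h 0) (fun x : A₁ × A₂ => u x.1 • g x.2) = 0
    funext x
    have hgc : g (x.2 + (h 0).2) = g x.2 := by
      have := congrFun (hg ![(h 0).2]) x.2
      simpa [addDerivIter, addDeriv, sub_eq_zero] using this
    have huc : u (x.1 + (h 0).1) • g x.2 = u x.1 • g x.2 := by
      have := congrFun (hu (g x.2) ![(h 0).1]) x.1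
      simpa [addDerivIter, addDeriv, sub_eq_zero] using this
    show u (x.1 + (h 0).1) • g (x.2 + (h 0).2) - u x.1 • g x.2 = 0
    rw [hgc, huc, sub_self]
  | succ N ih =>
    intro α β hab u g hu hg
    rw [pd_iff]
    intro b
    have hsplit : addDeriv b (fun x : A₁ × A₂ => u x.1 • g x.2)
        = (fun x : A₁ × A₂ => u (x.1 + b.1) • (addDeriv b.2 g) x.2)
          + (fun x : A₁ × A₂ => (addDeriv b.1 u) x.1 • g x.2) := by
      funext x
      show u (x.1 + b.1) • g (x.2 + b.2) - u x.1 • g x.2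
        = u (x.1 + b.1) • (g (x.2 + b.2) - g x.2) + (u (x.1 + b.1) - u x.1) • g x.2
      rw [smul_sub, sub_smul]
      abel
    rw [hsplit]
    refine pd_add ?_ ?_
    · -- first term
      rcases Nat.eq_zero_or_pos β with hb0 | hbpos
      · subst hb0
        have hg0 : addDeriv b.2 g = 0 := by
          have := hg ![b.2]
          simpa [addDerivIter] using this
        have : (fun x : A₁ × A₂ => u (x.1 + b.1) • (addDeriv b.2 g) x.2) = 0 := by
          funext x
          rw [hg0]
          simp
        rw [this]
        exact pd_zero_fun N
      · obtain ⟨β', rfl⟩ : ∃ β', β = β' + 1 := ⟨β - 1, by omega⟩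
        refine ih α β' (by omega) (fun t => u (t + b.1)) (addDeriv b.2 g)
          (fun c => pd_comp_shift b.1 (hu c)) (pd_deriv hg b.2)
    · -- second term
      rcases Nat.eq_zero_or_pos α with ha0 | hapos
      · subst ha0
        have hu0 : ∀ c : W, addDeriv b.1 (fun t => u t • c) = 0 := by
          intro c
          have := hu c ![b.1]
          simpa [addDerivIter] using this
        have : (fun x : A₁ × A₂ => (addDeriv b.1 u) x.1 • g x.2) = 0 := by
          funext x
          have := congrFun (hu0 (g x.2)) x.1
          show (u (x.1 + b.1) - u x.1) • g x.2 = 0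
          rw [sub_smul]
          simpa [addDeriv, sub_eq_zero] using this
        rw [this]
        exact pd_zero_fun N
      · obtain ⟨α', rfl⟩ : ∃ α', α = α' + 1 := ⟨α - 1, by omega⟩
        refine ih α' β (by omega) (addDeriv b.1 u) g (fun c => ?_) hg
        have : (fun t => (addDeriv b.1 u) t • c) = addDeriv b.1 (fun t => u t • c) := by
          funext t
          show (u (t + b.1) - u t) • c = u (t + b.1) • c - u t • c
          rw [sub_smul]
        rw [this]
        exact pd_deriv (hu c) b.1

end Leibniz

section Assembly

variable {A M : Type*} [AddCommGroup A] [AddCommGroup M]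

lemma pd_iter_deriv {m : ℕ} {f : A → M} (hf : PD m f) (e : A) :
    ∀ a : ℕ, PD (m - a) ((addDeriv e)^[a] f) := by
  have key : ∀ (a m : ℕ) (f : A → M), PD m f → PD (m - a) ((addDeriv e)^[a] f) := by
    intro a
    induction a with
    | zero => intro m f hf; simpa using hf
    | succ a ih =>
      intro m f hf
      rw [Function.iterate_succ_apply]
      cases m with
      | zero =>
        have h0 : addDeriv e f = 0 := by
          have := hf ![e]
          simpa [addDerivIter] using this
        rw [h0, addDeriv_iterate_zero_fun]
        exact pd_zero_fun _
      | succ m =>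
        simpa [Nat.succ_sub_succ] using ih m (addDeriv e f) (pd_deriv hf e)
  exact fun a => key a m f hf

lemma main_aux (p : ℕ) (hp : p.Prime) (r s : ℕ) (hr : 1 ≤ r) (hs : 1 ≤ s)
    {W : Type*} [AddCommGroup W] (hW : ∀ w : W, p ^ s • w = 0) :
    ∀ (n : ℕ) (d : Fin n → ℕ), (∀ i, d i ∣ p ^ r) → ∀ (k : ℕ) (P : (Fin n → ℤ) → W),
      PD k P →
      PD (k * s * (p ^ r - 1)) (fun x : ∀ i, ZMod (d i) => P (fun i => ((x i).val : ℤ))) := by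
  intro n
  induction n with
  | zero =>
    intro d hd k P hP
    exact pd_mono (Nat.zero_le _) (pd_const_of_subsingleton _)
  | succ n ihn =>
    intro d hd k P hP
    set D := p ^ r - 1 with hDdef
    have hconsadd : ∀ (t₁ t₂ : ℤ) (z₁ z₂ : Fin n → ℤ),
        (Fin.cons t₁ z₁ : Fin (n + 1) → ℤ) + Fin.cons t₂ z₂ = Fin.cons (t₁ + t₂) (z₁ + z₂) := by
      intro t₁ t₂ z₁ z₂
      funext i
      refine Fin.cases ?_ (fun j => ?_) i
      · simp
      · simp
    set e₀ : Fin (n + 1) → ℤ := Fin.cons 1 0 with he₀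
    -- the slices of the iterated derivatives of P
    have hslice : ∀ (a : ℕ) (z : Fin n → ℤ) (t : ℤ),
        (addDeriv (1 : ℤ))^[a] (fun t' => P (Fin.cons t' z)) t
          = (addDeriv e₀)^[a] P (Fin.cons t z) := by
      intro a
      induction a with
      | zero => intro z t; rfl
      | succ a iha =>
        intro z t
        rw [Function.iterate_succ_apply', Function.iterate_succ_apply']
        have h1 : addDeriv (1 : ℤ) ((addDeriv (1 : ℤ))^[a] (fun t' => P (Fin.cons t' z))) t
            = (addDeriv e₀)^[a] P (Fin.cons (t + 1) z)
              - (addDeriv e₀)^[a] P (Fin.cons t z) := by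
          show (addDeriv (1 : ℤ))^[a] _ (t + 1) - (addDeriv (1 : ℤ))^[a] _ t = _
          rw [iha, iha]
        rw [h1]
        show _ = (addDeriv e₀)^[a] P (Fin.cons t z + e₀) - (addDeriv e₀)^[a] P (Fin.cons t z)
        rw [show (Fin.cons t z : Fin (n + 1) → ℤ) + e₀ = Fin.cons (t + 1) z by
          rw [he₀, hconsadd, add_zero]]
    -- the coefficient polynomials
    set Pa : ℕ → (Fin n → ℤ) → W := fun a z => (addDeriv e₀)^[a] P (Fin.cons 0 z) with hPa
    have φadd : ∀ z₁ z₂ : Fin n → ℤ,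
        (Fin.cons 0 (z₁ + z₂) : Fin (n + 1) → ℤ) = Fin.cons 0 z₁ + Fin.cons 0 z₂ := by
      intro z₁ z₂
      rw [hconsadd, add_zero]
    set φ : (Fin n → ℤ) →+ (Fin (n + 1) → ℤ) :=
      AddMonoidHom.mk' (fun z => Fin.cons 0 z) φadd with hφ
    have hPadeg : ∀ a : ℕ, PD (k - a) (Pa a) := by
      intro a
      have := pd_comp_hom φ (pd_iter_deriv hP e₀ a)
      exact this
    -- apply the induction hypothesis to the coefficient polynomials
    have hQa : ∀ a : ℕ, PD ((k - a) * s * D)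
        (fun x' : ∀ i : Fin n, ZMod (d i.succ) => Pa a (fun i => ((x' i).val : ℤ))) :=
      fun a => ihn (fun i => d i.succ) (fun i => hd i.succ) (k - a) (Pa a) (hPadeg a)
    -- Newton expansion of the composite function
    have hdecomp : ∀ x : ∀ i : Fin (n + 1), ZMod (d i),
        P (fun i => ((x i).val : ℤ))
          = ∑ a ∈ Finset.range (k + 1),
              ((x 0).val.choose a) • Pa a (fun i => ((x i.succ).val : ℤ)) := by
      intro x
      set z : Fin n → ℤ := fun i => ((x i.succ).val : ℤ) with hz
      set g : ℤ → W := fun t => P (Fin.cons t z) with hgz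
      have hgdeg : (addDeriv (1 : ℤ))^[k + 1] g = 0 := by
        funext t
        rw [hgz]
        rw [hslice (k + 1) z t, delta_of_pd hP e₀]
        rfl
      have h2 : P (fun i => ((x i).val : ℤ)) = g (((x 0).val : ℕ) : ℤ) := by
        rw [hgz]
        congr 1
        funext i
        refine Fin.cases ?_ (fun j => ?_) i
        · rfl
        · rfl
      rw [h2, newton g k hgdeg (x 0).val]
      refine Finset.sum_congr rfl fun a _ => ?_
      congr 1
      rw [hslice a z 0]
    have hrw : (fun x : ∀ i, ZMod (d i) => P (fun i => ((x i).val : ℤ)))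
        = fun x => ∑ a ∈ Finset.range (k + 1),
            ((x 0).val.choose a) • Pa a (fun i => ((x i.succ).val : ℤ)) := by
      funext x
      exact hdecomp x
    rw [hrw]
    refine pd_fun_sum _ _ fun a ha => ?_
    have hak : a ≤ k := by
      simp only [Finset.mem_range] at ha
      omega
    -- the pair map
    set ψ : (∀ i : Fin (n + 1), ZMod (d i)) →+ (ZMod (d 0) × ∀ i : Fin n, ZMod (d i.succ)) :=
      AddMonoidHom.mk' (fun x => (x 0, fun i => x i.succ)) (fun x y => rfl) with hψ
    have hu : ∀ c : W, PD (a * s * D)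
        (fun t : ZMod (d 0) => ((t.val.choose a : ℕ) : ℤ) • c) := by
      intro c
      have := pd_binomial p r s hp hr hs hW (d 0) (hd 0) a c
      have heq : (fun t : ZMod (d 0) => ((t.val.choose a : ℕ) : ℤ) • c)
          = fun t : ZMod (d 0) => t.val.choose a • c := by
        funext t
        exact natCast_zsmul c _
      rw [heq, hDdef]
      exact this
    have harith : a * s * D + (k - a) * s * D = k * s * D := by
      have h1 : a + (k - a) = k := by omega
      calc a * s * D + (k - a) * s * D = (a + (k - a)) * s * D := by ring
        _ = k * s * D := by rw [h1]
    have hL := pd_leibniz (k * s * D) (a * s * D) ((k - a) * s * D) harith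
      (fun t : ZMod (d 0) => ((t.val.choose a : ℕ) : ℤ))
      (fun x' : ∀ i : Fin n, ZMod (d i.succ) => Pa a (fun i => ((x' i).val : ℤ)))
      hu (hQa a)
    have hcomp := pd_comp_hom ψ hL
    have hfinal : (fun x : ∀ i : Fin (n + 1), ZMod (d i) =>
        ((x 0).val.choose a) • Pa a (fun i => ((x i.succ).val : ℤ)))
        = (fun y : ZMod (d 0) × ∀ i : Fin n, ZMod (d i.succ) =>
            ((y.1.val.choose a : ℕ) : ℤ) • Pa a (fun i => ((y.2 i).val : ℤ))) ∘ ψ := by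
      funext x
      show ((x 0).val.choose a) • _ = ((((x 0).val.choose a : ℕ) : ℤ)) • _
      rw [natCast_zsmul]
      rfl
    rw [hfinal]
    exact hcomp

end Assembly

/-- Let `p` be a prime, `r, s ≥ 1`, and let `G = ℤ/d_1ℤ × ⋯ × ℤ/d_nℤ` with each `d_i ∣ p^r`.
Let `W` be a `p^s`-torsion abelian group and let `P : ℤ^n → W` be a polynomial of degree at
most `k`.  Then `x ↦ P(|x|)` (with `|x|` the standard representative) is a polynomial of
degree at most `k·s·(p^r − 1)` on `G`. -/
theorem residue_of_polynomial_is_polynomial (p : ℕ) (hp : p.Prime) (r s : ℕ)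
    (hr : 1 ≤ r) (hs : 1 ≤ s) (n : ℕ) (d : Fin n → ℕ) (hd : ∀ i, d i ∣ p ^ r)
    (W : Type*) [AddCommGroup W] (hW : ∀ w : W, p ^ s • w = 0)
    (k : ℕ) (P : (Fin n → ℤ) → W)
    (hP : ∀ h : Fin (k + 1) → (Fin n → ℤ), addDerivIter (k + 1) h P = 0) :
    ∀ h : Fin (k * s * (p ^ r - 1) + 1) → (∀ i, ZMod (d i)),
      addDerivIter (k * s * (p ^ r - 1) + 1) h
        (fun x : ∀ i, ZMod (d i) => P (fun i => ((x i).val : ℤ))) = 0 := by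
  intro h
  exact main_aux p hp r s hr hs hW n d hd k P hP h
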